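/- arXiv:math/0502027 — 3 statements merged into one kernel-verified Lean document; each statement's English description precedes it below -/
import Mathlib

section
/- The set of linear operators on P_n commuting with the differentiation operator D is a commutative subalgebra of L(P_n) of dimension n+1, and it is a maximal commutative subalgebra. -/
open Polynomial

set_option synthInstance.maxHeartbeats 1000000
set_option maxHeartbeats 1000000

/-- `P n` is the space of complex polynomials of degree at most `n`. -/
noncomputable def Pn (n : ℕ) : Submodule ℂ (Polynomial ℂ) := Polynomial.degreeLT ℂ (n + 1)

noncomputable instance instPnEndAddCommGroup (n : ℕ) : AddCommGroup (Module.End ℂ (Pn n)) :=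
  LinearMap.addCommGroup

noncomputable instance instPnEndRing (n : ℕ) : Ring (Module.End ℂ (Pn n)) := Module.End.instRing

/-- The differentiation operator on `Pn n`. -/
noncomputable def Dop (n : ℕ) : Module.End ℂ (Pn n) :=
  (Polynomial.derivative (R := ℂ)).restrict (p := Pn n) (q := Pn n)
    (fun f hf => by
      simp only [Pn, Polynomial.mem_degreeLT] at *
      exact lt_of_le_of_lt (Polynomial.degree_derivative_le) hf)

/-- The subalgebra of operators on `Pn n` commuting with `Dop n`
(the centralizer of `{Dop n}`). -/
noncomputable def Cent (n : ℕ) : Subalgebra ℂ (Module.End ℂ (Pn n)) :=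
  Subalgebra.centralizer ℂ {Dop n}

-- auxiliary definitions and lemmas
noncomputable def vv (n : ℕ) : Pn n := ⟨X ^ n, by
  simp only [Pn, mem_degreeLT, degree_X_pow]
  exact_mod_cast Nat.lt_succ_self n⟩

lemma dop_pow_coe (n k : ℕ) (x : Pn n) :
    (((Dop n ^ k) x : Pn n) : Polynomial ℂ) = derivative^[k] (x : Polynomial ℂ) := by
  rw [Dop, Module.End.pow_restrict, LinearMap.restrict_coe_apply, Module.End.pow_apply]

lemma b_coe (n : ℕ) (k : ℕ) :
    (((Dop n ^ k) (vv n) : Pn n) : Polynomial ℂ)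
      = (Nat.descFactorial n k : ℂ) • X ^ (n - k) := by
  rw [dop_pow_coe]
  exact Polynomial.iterate_derivative_X_pow_eq_smul n k

lemma finrank_Pn (n : ℕ) : Module.finrank ℂ (Pn n) = n + 1 := by
  rw [Pn, (Polynomial.degreeLTEquiv ℂ (n+1)).finrank_eq]
  simp

lemma li_b (n : ℕ) :
    LinearIndependent ℂ (fun k : Fin (n+1) => (Dop n ^ (k:ℕ)) (vv n)) := by
  apply LinearIndependent.of_comp (Pn n).subtype
  have h1 : LinearIndependent ℂ (fun k : Fin (n+1) => (X:ℂ[X]) ^ (n - (k:ℕ))) := by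
    have h2 := (Polynomial.basisMonomials ℂ).linearIndependent.comp
      (fun k : Fin (n+1) => n - (k:ℕ))
      (fun a b hab => by
        have ha := a.isLt; have hb := b.isLt
        simp only at hab
        exact Fin.ext (by omega))
    convert h2 using 1
    funext k
    simp [Function.comp, Polynomial.coe_basisMonomials, X_pow_eq_monomial]
  have h3 := h1.units_smul (fun k : Fin (n+1) =>
    Units.mk0 ((Nat.descFactorial n k : ℂ)) (by
      refine Nat.cast_ne_zero.mpr ?_
      rw [Ne, Nat.descFactorial_eq_zero_iff_lt]
      have := k.isLt; omega))
  convert h3 using 1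
  funext k
  simp only [Function.comp_apply, Submodule.subtype_apply, Pi.smul_apply']
  rw [b_coe]
  simp [Units.smul_mk0]

noncomputable def bB (n : ℕ) : Module.Basis (Fin (n+1)) ℂ (Pn n) :=
  basisOfLinearIndependentOfCardEqFinrank (li_b n) (by simp [finrank_Pn])

lemma bB_apply (n : ℕ) (k : Fin (n+1)) : bB n k = (Dop n ^ (k:ℕ)) (vv n) := by
  rw [bB]
  exact congrFun (coe_basisOfLinearIndependentOfCardEqFinrank _ _) k

lemma cent_rep (n : ℕ) {T : Module.End ℂ (Pn n)} (hT : T ∈ Cent n) :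
    ∃ c : Fin (n+1) → ℂ, T = ∑ k : Fin (n+1), c k • (Dop n)^(k:ℕ) := by
  have hDT : Commute (Dop n) T :=
    (Subalgebra.mem_centralizer_iff ℂ).mp hT _ (Set.mem_singleton _)
  have hcomm : ∀ k : ℕ, T * (Dop n)^k = (Dop n)^k * T := fun k => (hDT.pow_left k).eq.symm
  obtain ⟨c, hc⟩ : ∃ c : Fin (n+1) → ℂ, c = (bB n).repr (T (vv n)) := ⟨_, rfl⟩
  refine ⟨c, ?_⟩
  have hTv : T (vv n) = ∑ k : Fin (n+1), c k • (Dop n ^ (k:ℕ)) (vv n) := by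
    conv_lhs => rw [← (bB n).sum_repr (T (vv n))]
    exact Finset.sum_congr rfl (fun k _ => by rw [bB_apply, hc])
  apply (bB n).ext
  intro j
  rw [bB_apply]
  calc T ((Dop n ^ (j:ℕ)) (vv n)) = (T * Dop n ^ (j:ℕ)) (vv n) := rfl
    _ = (Dop n ^ (j:ℕ) * T) (vv n) := by rw [hcomm]
    _ = (Dop n ^ (j:ℕ)) (T (vv n)) := rfl
    _ = ∑ k : Fin (n+1), c k • (Dop n ^ (k:ℕ)) ((Dop n ^ (j:ℕ)) (vv n)) := by
        rw [hTv, map_sum]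
        refine Finset.sum_congr rfl (fun k _ => ?_)
        rw [map_smul, ← Module.End.mul_apply, ← Module.End.mul_apply, ← pow_add, ← pow_add,
          add_comm (j:ℕ) (k:ℕ)]
    _ = (∑ k : Fin (n+1), c k • (Dop n)^(k:ℕ)) ((Dop n ^ (j:ℕ)) (vv n)) := by
        rw [LinearMap.sum_apply]
        exact Finset.sum_congr rfl (fun k _ => by rw [LinearMap.smul_apply])

lemma dop_pow_mem (n k : ℕ) : (Dop n)^k ∈ Cent n := by
  rw [Cent, Subalgebra.mem_centralizer_iff]
  intro g hg
  rw [Set.mem_singleton_iff] at hg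
  subst hg
  exact ((Commute.refl (Dop n)).pow_right k).eq

noncomputable def BB (n : ℕ) : Fin (n+1) → (Cent n) :=
  fun k => ⟨(Dop n)^(k:ℕ), dop_pow_mem n k⟩

lemma li_BB (n : ℕ) : LinearIndependent ℂ (BB n) := by
  apply LinearIndependent.of_comp
    ((LinearMap.applyₗ (vv n)).comp (Subalgebra.toSubmodule (Cent n)).subtype)
  have : (((LinearMap.applyₗ (vv n)).comp (Subalgebra.toSubmodule (Cent n)).subtype) ∘ BB n)
      = fun k : Fin (n+1) => (Dop n ^ (k:ℕ)) (vv n) := by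
    funext k; rfl
  rw [this]
  exact li_b n

lemma span_BB (n : ℕ) : ⊤ ≤ Submodule.span ℂ (Set.range (BB n)) := by
  rintro ⟨T, hT⟩ -
  obtain ⟨c, hc⟩ := cent_rep n hT
  rw [Submodule.mem_span_range_iff_exists_fun]
  refine ⟨c, ?_⟩
  apply Subtype.val_injective
  push_cast
  exact hc.symm

noncomputable def basisCent (n : ℕ) : Module.Basis (Fin (n+1)) ℂ (Cent n) :=
  Module.Basis.mk (li_BB n) (span_BB n)

lemma finrank_Cent (n : ℕ) : Module.finrank ℂ (Cent n) = n + 1 := by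
  rw [Module.finrank_eq_card_basis (basisCent n), Fintype.card_fin]

/-- The set of operators on `P_n` commuting with `D` is a commutative subalgebra of
`L(P_n)` of dimension `n + 1`, and it is a maximal commutative subalgebra. -/
theorem centralizer_of_D_commutative_maximal_dim (n : ℕ) (hn : 0 < n) :
    (∀ S ∈ Cent n, ∀ T ∈ Cent n, S * T = T * S) ∧
    Module.finrank ℂ (Cent n) = n + 1 ∧
    (∀ B : Subalgebra ℂ (Module.End ℂ (Pn n)),
      (∀ S ∈ B, ∀ T ∈ B, S * T = T * S) → Cent n ≤ B → B = Cent n) := by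
  refine ⟨?_, finrank_Cent n, ?_⟩
  · intro S hS T hT
    obtain ⟨c, rfl⟩ := cent_rep n hS
    obtain ⟨d, rfl⟩ := cent_rep n hT
    rw [Finset.sum_mul_sum, Finset.sum_mul_sum, Finset.sum_comm]
    refine Finset.sum_congr rfl fun j _ => Finset.sum_congr rfl fun k _ => ?_
    simp only [smul_mul_assoc, mul_smul_comm, ← pow_add]
    rw [smul_comm, add_comm]
  · intro B hB hle
    apply le_antisymm ?_ hle
    intro T hTB
    have hD : Dop n ∈ Cent n := by simpa using dop_pow_mem n 1
    rw [Cent, Subalgebra.mem_centralizer_iff]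
    intro g hg
    rw [Set.mem_singleton_iff] at hg
    subst hg
    exact hB _ (hle hD) _ hTB
end

section
/- Let f and g be polynomials of the same positive degree, and let Ω be a circular domain containing all roots of g. Then every root of f * g lies in Z(f) + Ω, i.e., for each root w of f*g there is a root u of f and a point v ∈ Ω with w = u + v. -/
open Polynomial

/-- The `*`-product of two polynomials of the same degree `m`:
`(f * g)(z) := Σ_{k=0}^{m} g^{(k)}(0) f^{(m-k)}(z)`. -/
noncomputable def starAst (m : ℕ) (f g : Polynomial ℂ) : Polynomial ℂ :=
  ∑ k ∈ Finset.range (m + 1),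
    Polynomial.C ((Polynomial.derivative^[k] g).eval 0) * (Polynomial.derivative^[m - k] f)

/-- The reflection operator `(Rf)(z) = f(-z)`. -/
noncomputable def reflOp (f : Polynomial ℂ) : Polynomial ℂ := f.comp (-Polynomial.X)

/-- A circular domain: a closed disk, the closed exterior of an open disk, or a closed
half-plane. -/
def IsCircularDomain (Ω : Set ℂ) : Prop :=
  (∃ c : ℂ, ∃ r : ℝ, Ω = Metric.closedBall c r) ∨
  (∃ c : ℂ, ∃ r : ℝ, Ω = (Metric.ball c r)ᶜ) ∨
  (∃ u : ℂ, u ≠ 0 ∧ ∃ c : ℝ, Ω = {z : ℂ | (u * z).re ≤ c})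

open Complex Finset

noncomputable def Complex.abs : AbsoluteValue ℂ ℝ := NormedField.toAbsoluteValue ℂ

lemma Complex.norm_eq_abs (z : ℂ) : ‖z‖ = Complex.abs z := rfl

lemma Complex.abs_ofReal (x : ℝ) : Complex.abs (x : ℂ) = |x| := Complex.norm_real x

lemma Complex.abs_conj (z : ℂ) : Complex.abs ((starRingEnd ℂ) z) = Complex.abs z :=
  Complex.norm_conj z

lemma Complex.sq_abs (z : ℂ) : Complex.abs z ^ 2 = Complex.normSq z := Complex.sq_norm z

lemma Complex.abs_natCast (n : ℕ) : Complex.abs (n : ℂ) = n := Complex.norm_natCast n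

lemma sq_to_le {a b : ℝ} (ha : 0 ≤ a) (hb : 0 ≤ b) (h : a ^ 2 ≤ b ^ 2) : a ≤ b := by
  have := sq_le_sq.mp h
  rwa [_root_.abs_of_nonneg ha, _root_.abs_of_nonneg hb] at this

lemma inv_exterior (b : ℂ) (r : ℝ) (hb : Complex.abs b < r) (s : ℂ) (hs : s ≠ 0) :
    r ≤ Complex.abs (s - b) ↔
      Complex.abs (s⁻¹ + (starRingEnd ℂ) b / ((r ^ 2 - Complex.abs b ^ 2 : ℝ) : ℂ)) ≤
        r / (r ^ 2 - Complex.abs b ^ 2) := by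
  have hb0 : 0 ≤ Complex.abs b := Complex.abs.nonneg b
  have hr : 0 < r := lt_of_le_of_lt hb0 hb
  set B : ℝ := r ^ 2 - Complex.abs b ^ 2 with hBdef
  have hB : 0 < B := by nlinarith
  have hsabs : 0 < Complex.abs s := by
    simpa [Complex.abs.pos_iff] using hs
  have hBC : ((B : ℂ)) ≠ 0 := by exact_mod_cast (ne_of_gt hB)
  have e1 : s⁻¹ + (starRingEnd ℂ) b / (B : ℂ) = ((B : ℂ) + s * (starRingEnd ℂ) b) / (s * (B : ℂ)) := by
    field_simp
  set A := Complex.abs ((B : ℂ) + s * (starRingEnd ℂ) b) with hAdef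
  have e2 : Complex.abs (s⁻¹ + (starRingEnd ℂ) b / (B : ℂ)) = A / (Complex.abs s * B) := by
    rw [e1, map_div₀, map_mul Complex.abs, Complex.abs_ofReal, abs_of_pos hB]
  have key : (r * Complex.abs s) ^ 2 - A ^ 2 = B * (Complex.abs (s - b) ^ 2 - r ^ 2) := by
    have h1 : Complex.abs (s - b) ^ 2 = (s.re - b.re) ^ 2 + (s.im - b.im) ^ 2 := by
      rw [Complex.sq_abs]; simp [Complex.normSq_apply]; ring
    have h2 : A ^ 2 = (B + (s.re * b.re + s.im * b.im)) ^ 2 + (s.im * b.re - s.re * b.im) ^ 2 := by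
      rw [hAdef, Complex.sq_abs]
      simp [Complex.normSq_apply, Complex.add_re, Complex.add_im, Complex.mul_re, Complex.mul_im]
      ring
    have h3 : Complex.abs s ^ 2 = s.re ^ 2 + s.im ^ 2 := by
      rw [Complex.sq_abs]; simp [Complex.normSq_apply]; ring
    have h4 : Complex.abs b ^ 2 = b.re ^ 2 + b.im ^ 2 := by
      rw [Complex.sq_abs]; simp [Complex.normSq_apply]; ring
    have hBeq : B = r ^ 2 - (b.re ^ 2 + b.im ^ 2) := by rw [hBdef, h4]
    rw [mul_pow, h1, h2, h3, hBeq]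
    ring
  rw [e2]
  have hiff2 : A / (Complex.abs s * B) ≤ r / B ↔ A ≤ r * Complex.abs s := by
    rw [div_le_div_iff₀ (by positivity) hB]
    constructor
    · intro h; nlinarith
    · intro h; nlinarith
  rw [hiff2]
  have hA0 : 0 ≤ A := Complex.abs.nonneg _
  have hD0 : 0 ≤ Complex.abs (s - b) := Complex.abs.nonneg _
  constructor
  · intro h
    have h5 : 0 ≤ Complex.abs (s - b) ^ 2 - r ^ 2 := by nlinarith
    have h6 : A ^ 2 ≤ (r * Complex.abs s) ^ 2 := by nlinarith
    exact sq_to_le hA0 (by positivity) h6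
  · intro h
    have h6 : A ^ 2 ≤ (r * Complex.abs s) ^ 2 := by
      have := pow_le_pow_left₀ hA0 h 2
      exact this
    have h5 : r ^ 2 ≤ Complex.abs (s - b) ^ 2 := by nlinarith
    exact sq_to_le hr.le hD0 h5

lemma inv_halfplane (u : ℂ) (δ : ℝ) (hδ : 0 < δ) (s : ℂ) (hs : s ≠ 0) :
    (u * s).re ≤ -δ ↔ Complex.abs (s⁻¹ + u / ((2 * δ : ℝ) : ℂ)) ≤ Complex.abs u / (2 * δ) := by
  have hsabs : 0 < Complex.abs s := by simpa [Complex.abs.pos_iff] using hs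
  have h2δ : (0:ℝ) < 2 * δ := by linarith
  set c : ℂ := ((2 * δ : ℝ) : ℂ) with hcdef
  have hC : c ≠ 0 := by
    rw [hcdef]; exact_mod_cast ne_of_gt h2δ
  have e1 : s⁻¹ + u / c = (c + u * s) / (s * c) := by
    field_simp
  set A := Complex.abs (c + u * s) with hAdef
  have e2 : Complex.abs (s⁻¹ + u / c) = A / (Complex.abs s * (2 * δ)) := by
    rw [e1, map_div₀, map_mul Complex.abs, hcdef, Complex.abs_ofReal, abs_of_pos h2δ]
  have key : (Complex.abs u * Complex.abs s) ^ 2 - A ^ 2 = -(4 * δ) * (δ + (u * s).re) := by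
    have h2 : A ^ 2 = (2 * δ + (u * s).re) ^ 2 + (u * s).im ^ 2 := by
      rw [hAdef, Complex.sq_abs, hcdef]
      simp [Complex.normSq_apply, Complex.add_re, Complex.add_im]
      ring
    have h3 : (Complex.abs u * Complex.abs s) ^ 2 = (u * s).re ^ 2 + (u * s).im ^ 2 := by
      rw [← map_mul Complex.abs, Complex.sq_abs]
      simp [Complex.normSq_apply]; ring
    rw [h3, h2]; ring
  rw [e2]
  have hiff2 : A / (Complex.abs s * (2 * δ)) ≤ Complex.abs u / (2 * δ) ↔
      A ≤ Complex.abs u * Complex.abs s := by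
    rw [div_le_div_iff₀ (by positivity) h2δ]
    constructor
    · intro h; nlinarith
    · intro h; nlinarith
  rw [hiff2]
  have hA0 : 0 ≤ A := Complex.abs.nonneg _
  have hU0 : 0 ≤ Complex.abs u * Complex.abs s := by positivity
  constructor
  · intro h
    have h6 : A ^ 2 ≤ (Complex.abs u * Complex.abs s) ^ 2 := by nlinarith
    exact sq_to_le hA0 hU0 h6
  · intro h
    have h6 : A ^ 2 ≤ (Complex.abs u * Complex.abs s) ^ 2 := pow_le_pow_left₀ hA0 h 2
    nlinarith


noncomputable def apair (m : ℕ) (p q : Polynomial ℂ) : ℂ :=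
  ∑ k ∈ Finset.range (m + 1),
    (-1 : ℂ) ^ k * ((derivative^[k] p).eval 0) * ((derivative^[m - k] q).eval 0)

lemma ev0_iter (h : Polynomial ℂ) (k : ℕ) :
    (derivative^[k] h).eval 0 = (Nat.factorial k : ℂ) * h.coeff k := by
  rw [← coeff_zero_eq_eval_zero, coeff_iterate_derivative, zero_add, Nat.descFactorial_self,
    nsmul_eq_mul]

lemma apair_eq_sum_coeff (m : ℕ) (p q : Polynomial ℂ) :
    apair m p q = ∑ k ∈ Finset.range (m + 1),
      (-1 : ℂ) ^ k * (Nat.factorial k : ℂ) * (Nat.factorial (m - k) : ℂ) * p.coeff k * q.coeff (m - k) := by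
  unfold apair
  refine Finset.sum_congr rfl fun k _ => ?_
  rw [ev0_iter, ev0_iter]
  ring

lemma iterate_derivative_taylor (t : ℂ) (h : Polynomial ℂ) (k : ℕ) :
    derivative^[k] (taylor t h) = taylor t (derivative^[k] h) := by
  induction k with
  | zero => simp
  | succ k ih =>
    rw [Function.iterate_succ_apply', ih, Function.iterate_succ_apply']
    rw [taylor_apply, taylor_apply, derivative_comp]
    simp

noncomputable def apP (m : ℕ) (p q : Polynomial ℂ) : Polynomial ℂ :=
  ∑ k ∈ Finset.range (m + 1),
    Polynomial.C ((-1 : ℂ) ^ k) * (derivative^[k] p * derivative^[m - k] q)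

lemma apP_eval (m : ℕ) (p q : Polynomial ℂ) (t : ℂ) :
    (apP m p q).eval t = ∑ k ∈ Finset.range (m + 1),
      (-1 : ℂ) ^ k * ((derivative^[k] p).eval t) * ((derivative^[m - k] q).eval t) := by
  unfold apP
  rw [eval_finset_sum]
  refine Finset.sum_congr rfl fun k _ => ?_
  simp [mul_assoc]

lemma derivative_apP (m : ℕ) (p q : Polynomial ℂ) (hp : p.natDegree ≤ m) (hq : q.natDegree ≤ m) :
    derivative (apP m p q) = 0 := by
  unfold apP
  rw [map_sum]
  have hstep : ∀ k ∈ Finset.range (m + 1),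
      derivative (Polynomial.C ((-1 : ℂ) ^ k) * (derivative^[k] p * derivative^[m - k] q)) =
        (fun j => Polynomial.C ((-1 : ℂ) ^ j) *
          (derivative^[j] p * derivative^[m + 1 - j] q)) k -
        (fun j => Polynomial.C ((-1 : ℂ) ^ j) *
          (derivative^[j] p * derivative^[m + 1 - j] q)) (k + 1) := by
    intro k hk
    have hk' : k ≤ m := Nat.lt_succ_iff.mp (Finset.mem_range.mp hk)
    have h1 : m + 1 - k = (m - k) + 1 := by omega
    have h2 : m + 1 - (k + 1) = m - k := by omega
    rw [derivative_mul, derivative_C, zero_mul, zero_add, derivative_mul]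
    rw [← Function.iterate_succ_apply' derivative k p,
        ← Function.iterate_succ_apply' derivative (m - k) q]
    simp only [h1, h2]
    rw [pow_succ, map_mul, map_neg, map_one]
    ring
  rw [Finset.sum_congr rfl hstep, Finset.sum_range_sub']
  have hz1 : derivative^[m + 1] q = 0 := iterate_derivative_eq_zero (by omega)
  have hz2 : derivative^[m + 1] p = 0 := iterate_derivative_eq_zero (by omega)
  simp [hz1, hz2]

lemma apair_eval (m : ℕ) (p q : Polynomial ℂ) (hp : p.natDegree ≤ m) (hq : q.natDegree ≤ m)
    (t : ℂ) :
    ∑ k ∈ Finset.range (m + 1),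
      (-1 : ℂ) ^ k * ((derivative^[k] p).eval t) * ((derivative^[m - k] q).eval t)
      = apair m p q := by
  have hd := derivative_apP m p q hp hq
  have hdeg : (apP m p q).natDegree = 0 := natDegree_eq_zero_of_derivative_eq_zero hd
  have hC : apP m p q = Polynomial.C ((apP m p q).coeff 0) := eq_C_of_natDegree_eq_zero hdeg
  have h1 : (apP m p q).eval t = (apP m p q).eval 0 := by
    conv_lhs => rw [hC]
    conv_rhs => rw [hC]
    simp
  have h2 := apP_eval m p q t
  have h3 := apP_eval m p q 0
  rw [← h2, h1, h3]
  rfl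

lemma apair_taylor (m : ℕ) (p q : Polynomial ℂ) (t : ℂ)
    (hp : p.natDegree ≤ m) (hq : q.natDegree ≤ m) :
    apair m (taylor t p) (taylor t q) = apair m p q := by
  have h : apair m (taylor t p) (taylor t q) =
      ∑ k ∈ Finset.range (m + 1),
        (-1 : ℂ) ^ k * ((derivative^[k] p).eval t) * ((derivative^[m - k] q).eval t) := by
    unfold apair
    refine Finset.sum_congr rfl fun k _ => ?_
    rw [iterate_derivative_taylor, iterate_derivative_taylor, taylor_eval, taylor_eval]
    simp
  rw [h, apair_eval m p q hp hq t]

lemma apair_reflect (m : ℕ) (p q : Polynomial ℂ)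
    (hp : p.natDegree ≤ m) (hq : q.natDegree ≤ m) :
    apair m (reflect m p) (reflect m q) = (-1 : ℂ) ^ m * apair m p q := by
  rw [apair_eq_sum_coeff, apair_eq_sum_coeff, Finset.mul_sum]
  rw [← Finset.sum_range_reflect]
  refine Finset.sum_congr rfl fun k hk => ?_
  have hk' : k ≤ m := Nat.lt_succ_iff.mp (Finset.mem_range.mp hk)
  have e1 : m + 1 - 1 - k = m - k := by omega
  have e2 : m - (m - k) = k := by omega
  simp only [e1, e2, coeff_reflect]
  rw [revAt_le (Nat.sub_le m k), revAt_le hk', e2]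
  have hsign : (-1 : ℂ) ^ m = (-1 : ℂ) ^ (m - k) * (-1 : ℂ) ^ k := by
    rw [← pow_add]
    congr 1
    omega
  have h2 : (-1 : ℂ) ^ k * (-1 : ℂ) ^ k = 1 := by
    rw [← pow_add]
    exact Even.neg_one_pow ⟨k, rfl⟩
  rw [hsign]
  linear_combination (-(1:ℂ) * (-1 : ℂ) ^ (m - k) * (Nat.factorial (m - k) : ℂ) * (Nat.factorial k : ℂ) *
    p.coeff k * q.coeff (m - k)) * h2

lemma iter_X_mul (h : Polynomial ℂ) (k : ℕ) :
    derivative^[k + 1] (X * h) =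
      Polynomial.C ((k + 1 : ℕ) : ℂ) * derivative^[k] h + X * derivative^[k + 1] h := by
  induction k with
  | zero => simp [derivative_mul]
  | succ k ih =>
    rw [Function.iterate_succ_apply' derivative (k + 1), ih, derivative_add, derivative_mul,
      derivative_mul, derivative_C, derivative_X, zero_mul, zero_add, one_mul,
      ← Function.iterate_succ_apply' derivative (k + 1), ← Function.iterate_succ_apply' derivative k]
    have : ((k + 1 + 1 : ℕ) : ℂ) = ((k + 1 : ℕ) : ℂ) + 1 := by push_cast; ring
    rw [this, map_add, map_one]
    ring

lemma ev0_X_mul_succ (h : Polynomial ℂ) (k : ℕ) :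
    (derivative^[k + 1] (X * h)).eval 0 = ((k + 1 : ℕ) : ℂ) * (derivative^[k] h).eval 0 := by
  rw [iter_X_mul]
  simp

lemma apair_polar0 (n : ℕ) (p q1 : Polynomial ℂ) :
    apair n (Polynomial.C ((n + 1 : ℕ) : ℂ) * p - X * derivative p) q1
      = apair (n + 1) p (X * q1) := by
  unfold apair
  conv_rhs => rw [Finset.sum_range_succ]
  have hlast : (-1 : ℂ) ^ (n + 1) * ((derivative^[n + 1] p).eval 0) *
      ((derivative^[n + 1 - (n + 1)] (X * q1)).eval 0) = 0 := by
    simp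
  rw [hlast, add_zero]
  refine Finset.sum_congr rfl fun k hk => ?_
  have hk' : k ≤ n := Nat.lt_succ_iff.mp (Finset.mem_range.mp hk)
  have h1 : n + 1 - k = (n - k) + 1 := by omega
  have e1 : (derivative^[k] (Polynomial.C ((n + 1 : ℕ) : ℂ) * p - X * derivative p)).eval 0
      = (((n + 1 : ℕ) : ℂ) - (k : ℂ)) * (derivative^[k] p).eval 0 := by
    rw [iterate_derivative_sub, iterate_derivative_C_mul]
    cases k with
    | zero => simp
    | succ k =>
      rw [eval_sub, eval_mul, eval_C, ev0_X_mul_succ,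
        ← Function.iterate_succ_apply derivative k]
      push_cast
      ring
  rw [e1, h1, ev0_X_mul_succ]
  have h2 : ((n - k + 1 : ℕ) : ℂ) = ((n + 1 : ℕ) : ℂ) - (k : ℂ) := by
    have : (((n - k) : ℕ) : ℂ) = (n : ℂ) - (k : ℂ) := by
      rw [Nat.cast_sub hk']
    push_cast [this]
    ring
  rw [h2]
  ring

lemma ev0_iter' (h : Polynomial ℂ) (k : ℕ) :
    (derivative^[k] h).eval 0 = (Nat.factorial k : ℂ) * h.coeff k := by
  rw [← coeff_zero_eq_eval_zero, coeff_iterate_derivative, zero_add, Nat.descFactorial_self,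
    nsmul_eq_mul]

lemma natDegree_polar (n : ℕ) (p : Polynomial ℂ) (v : ℂ) (hp : p.natDegree ≤ n + 1) :
    (Polynomial.C ((n + 1 : ℕ) : ℂ) * p + (Polynomial.C v - X) * derivative p).natDegree ≤ n := by
  refine natDegree_le_iff_coeff_eq_zero.mpr fun N hN => ?_
  obtain ⟨M, rfl⟩ : ∃ M, N = M + 1 := ⟨N - 1, by omega⟩
  have hM : n ≤ M := by omega
  have hd1 : (derivative p).coeff (M + 1) = p.coeff (M + 1 + 1) * ((M + 1 : ℕ) + 1) :=
    coeff_derivative p (M + 1)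
  have hz1 : p.coeff (M + 1 + 1) = 0 :=
    coeff_eq_zero_of_natDegree_lt (by omega)
  have hd2 : (derivative p).coeff M = p.coeff (M + 1) * ((M : ℕ) + 1) := coeff_derivative p M
  rw [coeff_add, coeff_C_mul, sub_mul, coeff_sub, coeff_C_mul, coeff_X_mul, hd1, hz1, hd2]
  by_cases hc : M = n
  · subst hc
    push_cast
    ring
  · have : p.coeff (M + 1) = 0 := coeff_eq_zero_of_natDegree_lt (by omega)
    simp [this]

lemma taylor_deriv (v : ℂ) (p : Polynomial ℂ) :
    derivative (taylor v p) = taylor v (derivative p) := by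
  rw [taylor_apply, taylor_apply, derivative_comp]
  simp

lemma natDegree_taylor_le (v : ℂ) (p : Polynomial ℂ) {n : ℕ} (h : p.natDegree ≤ n) :
    (taylor v p).natDegree ≤ n := by
  rw [natDegree_taylor]; exact h

lemma apair_polar (n : ℕ) (p q1 : Polynomial ℂ) (v : ℂ)
    (hp : p.natDegree ≤ n + 1) (hq1 : q1.natDegree ≤ n) :
    apair n (Polynomial.C ((n + 1 : ℕ) : ℂ) * p + (Polynomial.C v - X) * derivative p) q1
      = apair (n + 1) p ((X - Polynomial.C v) * q1) := by
  set P1 := Polynomial.C ((n + 1 : ℕ) : ℂ) * p + (Polynomial.C v - X) * derivative p with hP1def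
  have hP1 : P1.natDegree ≤ n := natDegree_polar n p v hp
  have htay : taylor v P1
      = Polynomial.C ((n + 1 : ℕ) : ℂ) * taylor v p - X * derivative (taylor v p) := by
    rw [hP1def, map_add, taylor_mul, taylor_C, taylor_mul, map_sub, taylor_C, taylor_X,
      taylor_deriv]
    ring
  have hXq : taylor v ((X - Polynomial.C v) * q1) = X * taylor v q1 := by
    rw [taylor_mul, map_sub, taylor_X, taylor_C]
    ring
  calc apair n P1 q1 = apair n (taylor v P1) (taylor v q1) :=
        (apair_taylor n P1 q1 v hP1 hq1).symm
    _ = apair n (Polynomial.C ((n + 1 : ℕ) : ℂ) * taylor v p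
          - X * derivative (taylor v p)) (taylor v q1) := by rw [htay]
    _ = apair (n + 1) (taylor v p) (X * taylor v q1) := apair_polar0 n (taylor v p) (taylor v q1)
    _ = apair (n + 1) (taylor v p) (taylor v ((X - Polynomial.C v) * q1)) := by rw [hXq]
    _ = apair (n + 1) p ((X - Polynomial.C v) * q1) := by
        refine apair_taylor (n + 1) p _ v hp ?_
        refine le_trans (natDegree_mul_le) ?_
        rw [natDegree_X_sub_C]
        omega

lemma eval_derivative_prod_roots (M : Multiset ℂ) (w : ℂ) (h : ∀ z ∈ M, w ≠ z) :
    (derivative (M.map (fun z => X - Polynomial.C z)).prod).eval w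
      = ((M.map (fun z => X - Polynomial.C z)).prod).eval w
        * (M.map (fun z => (w - z)⁻¹)).sum := by
  induction M using Multiset.induction with
  | empty => simp
  | cons a M ih =>
    have ha : w - a ≠ 0 := sub_ne_zero.mpr (h a (Multiset.mem_cons_self a M))
    have h' : ∀ z ∈ M, w ≠ z := fun z hz => h z (Multiset.mem_cons_of_mem hz)
    rw [Multiset.map_cons, Multiset.prod_cons, derivative_mul, Multiset.map_cons,
      Multiset.sum_cons, eval_add, eval_mul, eval_mul, ih h']
    simp only [derivative_sub, derivative_X, derivative_C, sub_zero, eval_one, one_mul,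
      eval_sub, eval_X, eval_C, eval_mul]
    field_simp

lemma laguerre (m : ℕ) (hm : 1 ≤ m) (p : Polynomial ℂ) (hp : p ≠ 0) (hd : p.natDegree ≤ m)
    (c : ℂ) (r' : ℝ) (hroots : ∀ z ∈ p.roots, r' ≤ dist z c)
    (v w : ℂ) (hv : dist v c < r') (hw : dist w c < r')
    (hroot : (Polynomial.C ((m : ℕ) : ℂ) * p + (Polynomial.C v - X) * derivative p).eval w = 0) :
    False := by
  -- w is not a root of p
  have hpw : p.eval w ≠ 0 := by
    intro h0
    have hmem : w ∈ p.roots := (mem_roots hp).mpr h0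
    exact absurd (hroots w hmem) (not_le.mpr hw)
  have hne : ∀ z ∈ p.roots, w ≠ z := by
    intro z hz heq
    exact hpw (heq ▸ ((mem_roots hp).mp hz))
  -- factorization and logarithmic derivative
  have hsplit : p = Polynomial.C p.leadingCoeff * (p.roots.map fun a => X - Polynomial.C a).prod :=
    (IsAlgClosed.splits p).eq_prod_roots
  set S : ℂ := (p.roots.map (fun z => (w - z)⁻¹)).sum with hSdef
  have hderiv : (derivative p).eval w = p.eval w * S := by
    conv_lhs => rw [hsplit]
    rw [derivative_mul, derivative_C, zero_mul, zero_add, eval_mul, eval_C,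
      eval_derivative_prod_roots _ _ hne]
    conv_rhs => rw [hsplit]
    rw [eval_mul, eval_C]
    ring
  -- the basic relation m = (w - v) * S
  have hrel : (m : ℂ) = (w - v) * S := by
    have h1 : (m : ℂ) * p.eval w + (v - w) * ((derivative p).eval w) = 0 := by
      have := hroot
      simpa [eval_add, eval_mul, eval_sub, eval_C, eval_X] using this
    rw [hderiv] at h1
    have h2 : p.eval w * ((m : ℂ) - (w - v) * S) = 0 := by ring_nf; linear_combination h1
    rcases mul_eq_zero.mp h2 with h3 | h3
    · exact absurd h3 hpw
    · linear_combination h3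
  have hwv : w - v ≠ 0 := by
    intro h0
    rw [h0, zero_mul] at hrel
    have hm0 : m = 0 := Nat.cast_eq_zero.mp hrel
    omega
  -- geometry
  set b : ℂ := w - c with hbdef
  have habs : Complex.abs b < r' := by rwa [Complex.dist_eq] at hw
  set B : ℝ := r' ^ 2 - Complex.abs b ^ 2 with hBdef
  have hB : 0 < B := by
    have := Complex.abs.nonneg b
    nlinarith
  set cb : ℂ := (starRingEnd ℂ) b / ((B : ℝ) : ℂ) with hcbdef
  have hcb : Complex.abs cb ≤ r' / B := by
    rw [hcbdef, map_div₀, Complex.abs_conj, Complex.abs_ofReal, _root_.abs_of_pos hB]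
    gcongr
  -- each inverted root lies in the image disk
  have hmem : ∀ z ∈ p.roots, Complex.abs ((w - z)⁻¹ + cb) ≤ r' / B := by
    intro z hz
    have hz' : w - z ≠ 0 := sub_ne_zero.mpr (hne z hz)
    have h1 : r' ≤ Complex.abs ((w - z) - b) := by
      have heq : (w - z) - b = c - z := by rw [hbdef]; ring
      rw [heq, ← Complex.norm_eq_abs, ← Complex.dist_eq, dist_comm]
      exact hroots z hz
    have h2 := (inv_exterior b r' habs (w - z) hz').mp h1
    rw [← hBdef, ← hcbdef] at h2
    exact h2
  set d : ℕ := Multiset.card p.roots with hddef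
  have hdm : d ≤ m := by
    have hcard : Multiset.card p.roots = p.natDegree :=
      splits_iff_card_roots.mp (IsAlgClosed.splits p)
    omega
  have hsum1 : Complex.abs (S + (d : ℂ) * cb) ≤ (d : ℝ) * (r' / B) := by
    have hsplit2 : S + (d : ℂ) * cb = (p.roots.map (fun z => (w - z)⁻¹ + cb)).sum := by
      rw [Multiset.sum_map_add]
      simp [hSdef, Multiset.map_const', Multiset.sum_replicate, nsmul_eq_mul, hddef]
    rw [hsplit2]
    have hn1 : Complex.abs ((p.roots.map (fun z => (w - z)⁻¹ + cb)).sum)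
        ≤ ((p.roots.map (fun z => (w - z)⁻¹ + cb)).map Complex.abs).sum := by
      simpa [Function.comp_def, ← Complex.norm_eq_abs] using
        norm_multiset_sum_le (p.roots.map (fun z => (w - z)⁻¹ + cb))
    refine le_trans hn1 ?_
    have hn2 : ((p.roots.map (fun z => (w - z)⁻¹ + cb)).map Complex.abs).sum
        ≤ (Multiset.card ((p.roots.map (fun z => (w - z)⁻¹ + cb)).map Complex.abs)) • (r' / B) := by
      refine Multiset.sum_le_card_nsmul _ _ ?_
      intro x hx
      rw [Multiset.mem_map] at hx
      obtain ⟨y, hy, rfl⟩ := hx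
      rw [Multiset.mem_map] at hy
      obtain ⟨z, hz, rfl⟩ := hy
      exact hmem z hz
    refine le_trans hn2 ?_
    simp [hddef, nsmul_eq_mul]
  have hsum2 : Complex.abs (S + (m : ℂ) * cb) ≤ (m : ℝ) * (r' / B) := by
    have hmd : S + (m : ℂ) * cb = (S + (d : ℂ) * cb) + ((m - d : ℕ) : ℂ) * cb := by
      push_cast [Nat.cast_sub hdm]
      ring
    rw [hmd]
    refine le_trans (Complex.abs.add_le _ _) ?_
    have h3 : Complex.abs (((m - d : ℕ) : ℂ) * cb) ≤ ((m - d : ℕ) : ℝ) * (r' / B) := by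
      rw [map_mul, Complex.abs_natCast]
      exact mul_le_mul_of_nonneg_left hcb (Nat.cast_nonneg _)
    have h4 : ((d : ℝ)) * (r' / B) + ((m - d : ℕ) : ℝ) * (r' / B) = (m : ℝ) * (r' / B) := by
      push_cast [Nat.cast_sub hdm]
      ring
    linarith [hsum1]
  have hS : S = (m : ℂ) * (w - v)⁻¹ := by
    field_simp
    linear_combination -hrel
  have hm' : (0 : ℝ) < (m : ℝ) := by exact_mod_cast (by omega : 0 < m)
  have hfin : Complex.abs ((w - v)⁻¹ + cb) ≤ r' / B := by
    have h1 : S + (m : ℂ) * cb = (m : ℂ) * ((w - v)⁻¹ + cb) := by rw [hS]; ring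
    have h2 : (m : ℝ) * Complex.abs ((w - v)⁻¹ + cb) ≤ (m : ℝ) * (r' / B) := by
      calc (m : ℝ) * Complex.abs ((w - v)⁻¹ + cb)
          = Complex.abs ((m : ℂ) * ((w - v)⁻¹ + cb)) := by
            rw [map_mul, Complex.abs_natCast]
        _ = Complex.abs (S + (m : ℂ) * cb) := by rw [h1]
        _ ≤ (m : ℝ) * (r' / B) := hsum2
    exact le_of_mul_le_mul_left h2 hm'
  have hback : r' ≤ Complex.abs ((w - v) - b) := by
    refine (inv_exterior b r' habs (w - v) hwv).mpr ?_
    rw [← hBdef, ← hcbdef]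
    exact hfin
  have heq2 : (w - v) - b = c - v := by rw [hbdef]; ring
  rw [heq2, ← Complex.norm_eq_abs, ← Complex.dist_eq, dist_comm] at hback
  linarith

theorem grace_disk (m : ℕ) (p q : Polynomial ℂ) (c : ℂ) (r : ℝ)
    (hp0 : p ≠ 0) (hpd : p.natDegree ≤ m) (hqd : q.degree = (m : ℕ))
    (hap : apair m p q = 0) (hq : ∀ z ∈ q.roots, z ∈ Metric.closedBall c r) :
    ∃ v ∈ Metric.closedBall c r, p.IsRoot v := by
  induction m using Nat.strong_induction_on generalizing p q with
  | _ m IH =>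
  have hq0 : q ≠ 0 := by
    intro h
    rw [h, degree_zero] at hqd
    simp at hqd
  cases m with
  | zero =>
    exfalso
    have hpC : p = Polynomial.C (p.coeff 0) := eq_C_of_natDegree_le_zero hpd
    have hap0 : apair 0 p q = p.eval 0 * q.eval 0 := by
      unfold apair
      simp [Finset.sum_range_one]
    have hp0' : p.eval 0 ≠ 0 := by
      rw [← coeff_zero_eq_eval_zero]
      intro h
      exact hp0 (by rw [hpC, h, map_zero])
    have hq0' : q.eval 0 ≠ 0 := by
      have hqC : q = Polynomial.C (q.coeff 0) :=
        eq_C_of_natDegree_le_zero (natDegree_le_iff_degree_le.mpr (by rw [hqd]))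
      rw [← coeff_zero_eq_eval_zero]
      intro h
      exact hq0 (by rw [hqC, h, map_zero])
    rw [hap0] at hap
    exact (mul_ne_zero hp0' hq0') hap
  | succ n =>
    by_contra hcon
    push_neg at hcon
    -- a root of q, lying in the disk
    have hqdeg : q.degree ≠ 0 := by
      rw [hqd]
      exact_mod_cast Nat.succ_ne_zero n
    obtain ⟨v, hv⟩ := IsAlgClosed.exists_root q hqdeg
    have hvball : v ∈ Metric.closedBall c r := hq v ((mem_roots hq0).mpr hv)
    -- factor q
    obtain ⟨q1, hq1⟩ := dvd_iff_isRoot.mpr hv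
    have hq10 : q1 ≠ 0 := by
      rintro rfl
      rw [mul_zero] at hq1
      exact hq0 hq1
    have hqnat : q.natDegree = n + 1 := natDegree_eq_of_degree_eq_some hqd
    have hq1nat : q1.natDegree = n := by
      have h1 : q.natDegree = (X - Polynomial.C v).natDegree + q1.natDegree := by
        rw [hq1, natDegree_mul (X_sub_C_ne_zero v) hq10]
      rw [natDegree_X_sub_C] at h1
      omega
    have hq1deg : q1.degree = (n : ℕ) := by
      rw [degree_eq_natDegree hq10, hq1nat]
    -- the polar derivative p1
    set p1 := Polynomial.C ((n + 1 : ℕ) : ℂ) * p + (Polynomial.C v - X) * derivative p with hp1def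
    have hP1d : p1.natDegree ≤ n := natDegree_polar n p v hpd
    have hap1 : apair n p1 q1 = 0 := by
      rw [hp1def, apair_polar n p q1 v hpd (le_of_eq hq1nat), ← hq1, hap]
    have hq1roots : ∀ z ∈ q1.roots, z ∈ Metric.closedBall c r := by
      intro z hz
      refine hq z ?_
      rw [hq1, roots_mul (by rw [← hq1]; exact hq0)]
      exact Multiset.mem_add.mpr (Or.inr hz)
    -- p1 is nonzero
    have hp1v : p1.eval v = ((n + 1 : ℕ) : ℂ) * p.eval v := by
      rw [hp1def]
      simp
    have hp10 : p1 ≠ 0 := by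
      intro h0
      have h1 : p1.eval v = 0 := by rw [h0, eval_zero]
      rw [hp1v] at h1
      have h2 : p.eval v = 0 := by
        rcases mul_eq_zero.mp h1 with h3 | h3
        · exact absurd h3 (by exact_mod_cast Nat.succ_ne_zero n)
        · exact h3
      exact hcon v hvball h2
    -- apply the induction hypothesis
    obtain ⟨v', hv'ball, hv'root⟩ := IH n (Nat.lt_succ_self n) p1 q1 hp10 hP1d hq1deg hap1 hq1roots
    -- the exclusion radius r'
    have hTne : (insert (r + 1) (p.roots.toFinset.image (fun z => dist z c))).Nonempty :=
      ⟨r + 1, Finset.mem_insert_self _ _⟩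
    set r' := (insert (r + 1) (p.roots.toFinset.image (fun z => dist z c))).min' hTne with hr'def
    have hrr' : r < r' := by
      rw [hr'def, Finset.lt_min'_iff]
      intro y hy
      rcases Finset.mem_insert.mp hy with rfl | hy
      · linarith
      · obtain ⟨z, hz, rfl⟩ := Finset.mem_image.mp hy
        have hzr : z ∈ p.roots := Multiset.mem_toFinset.mp hz
        have hnb : z ∉ Metric.closedBall c r := fun hmem => hcon z hmem ((mem_roots hp0).mp hzr)
        simpa [Metric.mem_closedBall, not_le] using hnb
    have hrootsr' : ∀ z ∈ p.roots, r' ≤ dist z c := by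
      intro z hz
      exact Finset.min'_le _ _
        (Finset.mem_insert_of_mem (Finset.mem_image_of_mem _ (Multiset.mem_toFinset.mpr hz)))
    have hvd : dist v c < r' := lt_of_le_of_lt (Metric.mem_closedBall.mp hvball) hrr'
    have hv'd : dist v' c < r' := lt_of_le_of_lt (Metric.mem_closedBall.mp hv'ball) hrr'
    exact laguerre (n + 1) (by omega) p hp0 hpd c r' hrootsr' v v' hvd hv'd hv'root

lemma natDegree_reflect_le {h : Polynomial ℂ} {m : ℕ} (hh : h.natDegree ≤ m) :
    (reflect m h).natDegree ≤ m := by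
  refine natDegree_le_iff_coeff_eq_zero.mpr fun N hN => ?_
  rw [coeff_reflect, revAt_eq_self_of_lt hN]
  exact coeff_eq_zero_of_natDegree_lt (lt_of_le_of_lt hh hN)

lemma eval_reflect_eq_zero {h : Polynomial ℂ} {m : ℕ} (hh : h.natDegree ≤ m) {x : ℂ}
    (hx : x ≠ 0) (hroot : (reflect m h).eval x = 0) : h.eval x⁻¹ = 0 := by
  have hx' : x⁻¹ ≠ 0 := inv_ne_zero hx
  letI : Invertible (x⁻¹) := invertibleOfNonzero hx'
  have hkey := eval₂_reflect_mul_pow (RingHom.id ℂ) (x⁻¹) m h hh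
  have hinv : (⅟(x⁻¹) : ℂ) = x := by rw [invOf_eq_inv, inv_inv]
  rw [hinv] at hkey
  have h1 : eval₂ (RingHom.id ℂ) x (reflect m h) = 0 := hroot
  rw [h1, zero_mul] at hkey
  exact hkey.symm

lemma reduce_to_disk (m : ℕ) (p q : Polynomial ℂ)
    (hp0 : p ≠ 0) (hpd : p.natDegree = m) (hqd : q.degree = (m : ℕ))
    (Ω : Set ℂ) (ζ : ℂ) (hζq : q.eval ζ ≠ 0)
    (γ : ℂ) (ρ : ℝ)
    (hiff : ∀ s : ℂ, s ≠ 0 → (ζ + s ∈ Ω ↔ s⁻¹ ∈ Metric.closedBall γ ρ))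
    (hroots : ∀ z ∈ q.roots, z ∈ Ω) (hap : apair m p q = 0) :
    ∃ v ∈ Ω, p.IsRoot v := by
  have hqnat : q.natDegree = m := natDegree_eq_of_degree_eq_some hqd
  have hq0 : q ≠ 0 := by
    intro h
    rw [h, degree_zero] at hqd
    simp at hqd
  set pt := taylor ζ p with hptdef
  set qt := taylor ζ q with hqtdef
  have hptd : pt.natDegree = m := by rw [hptdef, natDegree_taylor, hpd]
  have hqtd : qt.natDegree = m := by rw [hqtdef, natDegree_taylor, hqnat]
  have hpt0 : pt ≠ 0 := by
    intro h
    apply hp0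
    have h2 := congrArg (taylor (-ζ)) h
    rw [hptdef, taylor_taylor, neg_add_cancel, taylor_zero, map_zero] at h2
    exact h2
  set pr := reflect m pt with hprdef
  set qr := reflect m qt with hqrdef
  have hprd : pr.natDegree ≤ m := natDegree_reflect_le (le_of_eq hptd)
  have hpr0 : pr ≠ 0 := by
    rw [hprdef]
    exact fun h => hpt0 (reflect_eq_zero_iff.mp h)
  have hqrm : qr.coeff m = q.eval ζ := by
    rw [hqrdef, coeff_reflect, revAt_le (le_refl m), Nat.sub_self, hqtdef, taylor_coeff_zero]
  have hqrd : qr.degree = (m : ℕ) := by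
    have h1 : qr.natDegree ≤ m := natDegree_reflect_le (le_of_eq hqtd)
    have h2 : m ≤ qr.natDegree := le_natDegree_of_ne_zero (by rw [hqrm]; exact hζq)
    have h3 : qr ≠ 0 := by
      intro h
      rw [h, coeff_zero] at hqrm
      exact hζq hqrm.symm
    rw [degree_eq_natDegree h3]
    exact_mod_cast le_antisymm h1 h2
  have hpr0eval : pr.eval 0 ≠ 0 := by
    rw [← coeff_zero_eq_eval_zero, hprdef, coeff_reflect, revAt_le (Nat.zero_le m),
      Nat.sub_zero, ← hptd]
    exact fun h => hpt0 (leadingCoeff_eq_zero.mp h)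
  have hqr0eval : qr.eval 0 ≠ 0 := by
    have hq0' : qt ≠ 0 := by
      intro h
      apply hq0
      have h2 := congrArg (taylor (-ζ)) h
      rw [hqtdef, taylor_taylor, neg_add_cancel, taylor_zero, map_zero] at h2
      exact h2
    rw [← coeff_zero_eq_eval_zero, hqrdef, coeff_reflect, revAt_le (Nat.zero_le m),
      Nat.sub_zero, ← hqtd]
    exact fun h => hq0' (leadingCoeff_eq_zero.mp h)
  have hapr : apair m pr qr = 0 := by
    rw [hprdef, hqrdef, apair_reflect m pt qt (le_of_eq hptd) (le_of_eq hqtd),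
      hptdef, hqtdef, apair_taylor m p q ζ (le_of_eq hpd) (le_of_eq hqnat), hap, mul_zero]
  have hqroots : ∀ z ∈ qr.roots, z ∈ Metric.closedBall γ ρ := by
    intro z hz
    have hzroot : qr.eval z = 0 := (mem_roots'.mp hz).2
    have hz0 : z ≠ 0 := by
      rintro rfl
      exact hqr0eval hzroot
    have h1 : qt.eval z⁻¹ = 0 := eval_reflect_eq_zero (le_of_eq hqtd) hz0 hzroot
    have h2 : q.eval (z⁻¹ + ζ) = 0 := by
      rw [hqtdef, taylor_eval] at h1
      exact h1
    have h3 : (ζ + z⁻¹) ∈ Ω := by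
      refine hroots _ ((mem_roots hq0).mpr ?_)
      rw [IsRoot, add_comm]
      exact h2
    have h4 := (hiff z⁻¹ (inv_ne_zero hz0)).mp h3
    rwa [inv_inv] at h4
  obtain ⟨vr, hvrball, hvrroot⟩ := grace_disk m pr qr γ ρ hpr0 hprd hqrd hapr hqroots
  have hvr0 : vr ≠ 0 := by
    rintro rfl
    exact hpr0eval hvrroot
  have h1 : pt.eval vr⁻¹ = 0 := eval_reflect_eq_zero (le_of_eq hptd) hvr0 hvrroot
  have h2 : p.eval (vr⁻¹ + ζ) = 0 := by
    rw [hptdef, taylor_eval] at h1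
    exact h1
  refine ⟨ζ + vr⁻¹, ?_, ?_⟩
  · refine (hiff vr⁻¹ (inv_ne_zero hvr0)).mpr ?_
    rwa [inv_inv]
  · rw [IsRoot, add_comm]
    exact h2

lemma iterate_derivative_comp_neg (f : Polynomial ℂ) (w : ℂ) (k : ℕ) :
    derivative^[k] (f.comp (Polynomial.C w - X)) =
      Polynomial.C ((-1 : ℂ) ^ k) * (derivative^[k] f).comp (Polynomial.C w - X) := by
  induction k with
  | zero => simp
  | succ k ih =>
    rw [Function.iterate_succ_apply', ih, derivative_mul, derivative_C, zero_mul, zero_add,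
      derivative_comp, derivative_sub, derivative_C, derivative_X, zero_sub,
      ← Function.iterate_succ_apply' derivative k f]
    rw [pow_succ, map_mul, map_neg, map_one]
    ring

lemma apair_comp_neg (m : ℕ) (f g : Polynomial ℂ) (w : ℂ) :
    apair m (f.comp (Polynomial.C w - X)) g = (starAst m f g).eval w := by
  unfold apair starAst
  rw [eval_finset_sum, ← Finset.sum_range_reflect]
  refine Finset.sum_congr rfl fun k hk => ?_
  have hk' : k ≤ m := Nat.lt_succ_iff.mp (Finset.mem_range.mp hk)
  have e0 : m + 1 - 1 - k = m - k := by omega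
  have e2 : m - (m - k) = k := by omega
  rw [e0, eval_mul, eval_C, e2]
  rw [iterate_derivative_comp_neg, eval_mul, eval_C, eval_comp, eval_sub, eval_C, eval_X,
    sub_zero]
  have h2 : (-1 : ℂ) ^ (m - k) * (-1 : ℂ) ^ (m - k) = 1 := by
    rw [← pow_add]
    exact Even.neg_one_pow ⟨m - k, rfl⟩
  linear_combination (((derivative^[m - k] f).eval w) * ((derivative^[k] g).eval 0)) * h2

/-- Let `f` and `g` be polynomials of the same positive degree `m` and let `Ω` be a
circular domain containing all roots of `g`. Then every root of `f * g` lies in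
`Z(f) + Ω`. -/
theorem roots_ast_subset_roots_add (m : ℕ) (hm : 0 < m) (f g : Polynomial ℂ)
    (hf : f.degree = (m : ℕ)) (hg : g.degree = (m : ℕ))
    (Ω : Set ℂ) (hΩ : IsCircularDomain Ω) (hroots : ∀ z, g.IsRoot z → z ∈ Ω) :
    ∀ w, (starAst m f g).IsRoot w → ∃ u v, f.IsRoot u ∧ v ∈ Ω ∧ w = u + v := by
  intro w hw
  have hfnat : f.natDegree = m := natDegree_eq_of_degree_eq_some hf
  have hg0 : g ≠ 0 := by
    intro h
    rw [h, degree_zero] at hg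
    simp at hg
  set p := f.comp (Polynomial.C w - X) with hpdef
  have hpnat : p.natDegree = m := by
    rw [hpdef, natDegree_comp]
    have h1 : (Polynomial.C w - X).natDegree = 1 := by
      have h2 : Polynomial.C w - X = -(X - Polynomial.C w) := by ring
      rw [h2, natDegree_neg, natDegree_X_sub_C]
    rw [h1, hfnat, mul_one]
  have hp0 : p ≠ 0 := by
    intro h
    rw [h, natDegree_zero] at hpnat
    omega
  have hap : apair m p g = 0 := by
    rw [hpdef, apair_comp_neg]
    exact hw
  have hgroots : ∀ z ∈ g.roots, z ∈ Ω := fun z hz => hroots z (mem_roots'.mp hz).2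
  have hkey : ∃ v ∈ Ω, p.IsRoot v := by
    rcases hΩ with ⟨c, r, rfl⟩ | ⟨c, r, rfl⟩ | ⟨u, hu, c₀, rfl⟩
    · exact grace_disk m p g c r hp0 (le_of_eq hpnat) hg hap hgroots
    · by_cases hr : r ≤ 0
      · have hball : Metric.ball c r = ∅ := Metric.ball_eq_empty.mpr hr
        have hfd : f.degree ≠ 0 := by
          rw [hf]
          exact_mod_cast hm.ne'
        obtain ⟨u0, hu0⟩ := IsAlgClosed.exists_root f hfd
        refine ⟨w - u0, by simp [hball], ?_⟩
        rw [hpdef, IsRoot, eval_comp, eval_sub, eval_C, eval_X]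
        have : w - (w - u0) = u0 := by ring
        rw [this]
        exact hu0
      · push_neg at hr
        have hinf : ((fun t : ℝ => c + (t : ℂ)) '' (Set.Ioo 0 r)).Infinite := by
          refine Set.Infinite.image ?_ (Set.Ioo_infinite hr)
          intro a _ b _ hab
          have h1 : (a : ℂ) = (b : ℂ) := by simpa using hab
          exact_mod_cast h1
        obtain ⟨ζ, hζmem, hζnot⟩ := hinf.exists_notMem_finset g.roots.toFinset
        obtain ⟨t, ht, rfl⟩ := hζmem
        set ζ := c + (t : ℂ) with hζdef
        have hζq : g.eval ζ ≠ 0 := by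
          intro h
          exact hζnot (Multiset.mem_toFinset.mpr ((mem_roots hg0).mpr h))
        set b : ℂ := c - ζ with hbdef
        have habs : Complex.abs b < r := by
          rw [hbdef, hζdef]
          have : c - (c + (t : ℂ)) = -(t : ℂ) := by ring
          rw [this, map_neg_eq_map, Complex.abs_ofReal, abs_of_pos ht.1]
          exact ht.2
        set B : ℝ := r ^ 2 - Complex.abs b ^ 2 with hBdef
        set γ : ℂ := -((starRingEnd ℂ) b / ((B : ℝ) : ℂ)) with hγdef
        have hiff : ∀ s : ℂ, s ≠ 0 →
            (ζ + s ∈ (Metric.ball c r)ᶜ ↔ s⁻¹ ∈ Metric.closedBall γ (r / B)) := by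
          intro s hs
          have h1 : (ζ + s ∈ (Metric.ball c r)ᶜ) ↔ r ≤ Complex.abs (s - b) := by
            rw [Set.mem_compl_iff, Metric.mem_ball, not_lt, Complex.dist_eq, Complex.norm_eq_abs]
            have : ζ + s - c = s - b := by rw [hbdef]; ring
            rw [this]
          have h2 : (s⁻¹ ∈ Metric.closedBall γ (r / B)) ↔
              Complex.abs (s⁻¹ + (starRingEnd ℂ) b / ((B : ℝ) : ℂ)) ≤ r / B := by
            rw [Metric.mem_closedBall, Complex.dist_eq, Complex.norm_eq_abs, hγdef, sub_neg_eq_add]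
          rw [h1, h2, hBdef]
          exact inv_exterior b r habs s hs
        exact reduce_to_disk m p g hp0 hpnat hg _ ζ hζq γ (r / B) hiff hgroots hap
    · have hnsq : Complex.normSq u ≠ 0 := by
        intro h
        exact hu (Complex.normSq_eq_zero.mp h)
      set φ : ℝ → ℂ := fun t => (((c₀ + t) / Complex.normSq u : ℝ) : ℂ) * (starRingEnd ℂ) u
        with hφdef
      have hre : ∀ t : ℝ, (u * φ t).re = c₀ + t := by
        intro t
        rw [hφdef]
        have : u * ((((c₀ + t) / Complex.normSq u : ℝ) : ℂ) * (starRingEnd ℂ) u)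
            = (((c₀ + t) / Complex.normSq u : ℝ) : ℂ) * ((Complex.normSq u : ℝ) : ℂ) := by
          rw [← Complex.mul_conj]
          ring
        rw [this, ← Complex.ofReal_mul, Complex.ofReal_re]
        field_simp
      have hinf : (φ '' (Set.Ioi 0)).Infinite := by
        refine Set.Infinite.image ?_ (Set.Ioi_infinite 0)
        intro a _ b _ hab
        have h1 : (u * φ a).re = (u * φ b).re := by rw [hab]
        rw [hre, hre] at h1
        linarith
      obtain ⟨ζ, hζmem, hζnot⟩ := hinf.exists_notMem_finset g.roots.toFinset
      obtain ⟨t, ht, rfl⟩ := hζmem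
      have ht0 : (0 : ℝ) < t := ht
      have hζq : g.eval (φ t) ≠ 0 := by
        intro h
        exact hζnot (Multiset.mem_toFinset.mpr ((mem_roots hg0).mpr h))
      set γ : ℂ := -(u / ((2 * t : ℝ) : ℂ)) with hγdef
      have hiff : ∀ s : ℂ, s ≠ 0 →
          (φ t + s ∈ {z : ℂ | (u * z).re ≤ c₀} ↔
            s⁻¹ ∈ Metric.closedBall γ (Complex.abs u / (2 * t))) := by
        intro s hs
        have h1 : (φ t + s ∈ {z : ℂ | (u * z).re ≤ c₀}) ↔ (u * s).re ≤ -t := by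
          have h2 : u * (φ t + s) = u * φ t + u * s := by ring
          rw [Set.mem_setOf_eq, h2, Complex.add_re, hre]
          constructor <;> intro h <;> linarith
        have h3 : (s⁻¹ ∈ Metric.closedBall γ (Complex.abs u / (2 * t))) ↔
            Complex.abs (s⁻¹ + u / ((2 * t : ℝ) : ℂ)) ≤ Complex.abs u / (2 * t) := by
          rw [Metric.mem_closedBall, Complex.dist_eq, Complex.norm_eq_abs, hγdef, sub_neg_eq_add]
        rw [h1, h3]
        exact inv_halfplane u t ht0 s hs
      exact reduce_to_disk m p g hp0 hpnat hg _ (φ t) hζq γ (Complex.abs u / (2 * t))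
        hiff hgroots hap
  obtain ⟨v, hvΩ, hvroot⟩ := hkey
  have hfwv : f.IsRoot (w - v) := by
    rw [hpdef, IsRoot, eval_comp, eval_sub, eval_C, eval_X] at hvroot
    exact hvroot
  exact ⟨w - v, v, hfwv, hvΩ, by ring⟩
end

section
/- For γ ∈ ℂ, the polynomial g = γ^{n−1} φ_1 + γ^{n−2} φ_2 + ... + γ φ_{n−1} + φ_n satisfies (I − γD)g = φ_n − γⁿ, a polynomial all of whose roots have modulus (n!)^{1/n} |γ|; consequently K_h((I − γD)^{-1}) ≥ (n!)^{1/n} |γ|. -/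
open Polynomial

/-- `calD n` is the span of `I, D, D^2, ..., D^n` in `L(Pn n)`. -/
noncomputable def calD (n : ℕ) : Submodule ℂ (Module.End ℂ (Pn n)) :=
  Submodule.span ℂ (Set.range fun k : Fin (n + 1) => (Dop n) ^ (k : ℕ))

/-- `φ_k(z) = z^k / k!` as an element of `Pn n` (for `k ≤ n`). -/
noncomputable def phiP (n k : ℕ) (h : k ≤ n) : Pn n :=
  ⟨Polynomial.C (((Nat.factorial k : ℂ))⁻¹) * Polynomial.X ^ k, by
    rw [Pn, Polynomial.mem_degreeLT]
    exact lt_of_le_of_lt (Polynomial.degree_C_mul_X_pow_le _ _)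
      (by exact_mod_cast Nat.lt_succ_of_le h)⟩

/-- The set of roots of a polynomial. -/
def Zset (p : Polynomial ℂ) : Set ℂ := {z : ℂ | p.IsRoot z}

/-- The (asymmetric Hausdorff) distance `d_h(A, B) = sup_{y ∈ B} inf_{x ∈ A} |x - y|`. -/
noncomputable def dh (A B : Set ℂ) : ℝ := sSup ((fun y => Metric.infDist y A) '' B)

/-- `K_h(T) = sup { d_h(Z(f), Z(Tf)) : f ∈ P_n nonconstant }`. -/
noncomputable def Kh (n : ℕ) (T : Module.End ℂ (Pn n)) : ℝ :=
  sSup {d : ℝ | ∃ f : Pn n, 0 < (f : Polynomial ℂ).degree ∧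
    d = dh (Zset (f : Polynomial ℂ)) (Zset ((T f : Pn n) : Polynomial ℂ))}

section Helpers

lemma abs_multiset_sum_le (s : Multiset ℂ) :
    ‖s.sum‖ ≤ (s.map norm).sum := by
  induction s using Multiset.induction_on with
  | empty => simp
  | cons a s ih =>
    simp only [Multiset.sum_cons, Multiset.map_cons]
    exact le_trans (norm_add_le _ _) (by linarith)

lemma multiset_prod_abs (s : Multiset ℂ) :
    ‖s.prod‖ = (s.map norm).prod := by
  induction s using Multiset.induction_on with
  | empty => simp
  | cons a s ih => simp [norm_mul, ih]

lemma multiset_prod_nonneg_real (s : Multiset ℝ) (h : ∀ x ∈ s, 0 ≤ x) : 0 ≤ s.prod := by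
  induction s using Multiset.induction_on with
  | empty => simp
  | cons a s ih =>
    simp only [Multiset.prod_cons]
    exact mul_nonneg (h a (by simp)) (ih fun x hx => h x (by simp [hx]))

lemma multiset_pow_card_le_prod (s : Multiset ℝ) (R : ℝ) (hR : 0 ≤ R)
    (h : ∀ x ∈ s, R ≤ x) : R ^ Multiset.card s ≤ s.prod := by
  induction s using Multiset.induction_on with
  | empty => simp
  | cons a s ih =>
    simp only [Multiset.prod_cons, Multiset.card_cons, pow_succ]
    rw [mul_comm (R ^ Multiset.card s) R]
    exact mul_le_mul (h a (by simp)) (ih fun x hx => h x (by simp [hx]))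
      (pow_nonneg hR _) (le_trans hR (h a (by simp)))

lemma sum_half_pow (n : ℕ) : ∑ k ∈ Finset.Ico 1 (n+1), (1/2 : ℝ)^k = 1 - (1/2)^n := by
  induction n with
  | zero => simp
  | succ n ih =>
    rw [Finset.sum_Ico_succ_top (by omega), ih]
    ring

lemma esymm_card_eq_prod (s : Multiset ℂ) : s.esymm (Multiset.card s) = s.prod := by
  have h1 : s.powersetCard (Multiset.card s) = {s} := by
    have hcard1 : Multiset.card (s.powersetCard (Multiset.card s)) = 1 := by
      rw [Multiset.card_powersetCard, Nat.choose_self]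
    obtain ⟨a, ha⟩ := Multiset.card_eq_one.1 hcard1
    have hmem : a ∈ s.powersetCard (Multiset.card s) := by rw [ha]; simp
    obtain ⟨hle, hcard⟩ := Multiset.mem_powersetCard.1 hmem
    have : a = s := Multiset.eq_of_le_of_card_le hle (le_of_eq hcard.symm)
    rw [ha, this]
  rw [Multiset.esymm, h1]
  simp

lemma key_far (n : ℕ) (hn : 0 < n) (γ : ℂ) (hγ : γ ≠ 0) (f : Polynomial ℂ) (hf0 : f ≠ 0)
    (hdeg : f.natDegree ≤ n) (y : ℂ)
    (hfar : ∀ z : ℂ, f.IsRoot z → 2 * n * ‖γ‖ < ‖y - z‖) :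
    ∑ k ∈ Finset.range (n + 1), γ ^ k * ((Polynomial.derivative)^[k] f).eval y ≠ 0 := by
  set R : ℝ := 2 * n * ‖γ‖ with hRdef
  have hγpos : 0 < ‖γ‖ := norm_pos_iff.mpr hγ
  have hnR : (0:ℝ) < n := by exact_mod_cast hn
  have hRpos : 0 < R := by positivity
  set q : Polynomial ℂ := taylor y f with hqdef
  have hq0 : q ≠ 0 := fun h => hf0 (taylor_injective y (by rw [map_zero]; exact h))
  set m := f.natDegree with hmdef
  have hm : q.natDegree = m := natDegree_taylor f y
  have hcard : Multiset.card q.roots = m := by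
    rw [← hm]; exact splits_iff_card_roots.1 (IsAlgClosed.splits q)
  have hroots : ∀ w ∈ q.roots, R < ‖w‖ := by
    intro w hw
    have hr : q.IsRoot w := (mem_roots hq0).1 hw
    have : f.IsRoot (w + y) := by
      have := taylor_eval y f w
      rw [hqdef] at hr
      unfold Polynomial.IsRoot at *
      rw [← this]; exact hr
    have h2 := hfar (w + y) this
    calc R < ‖y - (w + y)‖ := h2
      _ = ‖w‖ := by rw [show y - (w + y) = -w by ring, norm_neg]
  set P : ℝ := (q.roots.map norm).prod with hPdef
  have hPpos : 0 < P := by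
    have h1 : R ^ Multiset.card (q.roots.map norm) ≤ P :=
      multiset_pow_card_le_prod _ R hRpos.le (by
        intro x hx
        obtain ⟨w, hw, rfl⟩ := Multiset.mem_map.1 hx
        exact (hroots w hw).le)
    exact lt_of_lt_of_le (pow_pos hRpos _) h1
  set L : ℝ := ‖q.leadingCoeff‖ with hLdef
  have hLpos : 0 < L := norm_pos_iff.mpr (leadingCoeff_ne_zero.2 hq0)
  set A : ℝ := L * P with hAdef
  have hApos : 0 < A := mul_pos hLpos hPpos
  have hc : ∀ k, k ≤ m → q.coeff k =
      q.leadingCoeff * (-1) ^ (m - k) * q.roots.esymm (m - k) := by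
    intro k hk
    have := Polynomial.coeff_eq_esymm_roots_of_splits
      (IsAlgClosed.splits q) (k := k) (by rw [hm]; exact hk)
    rwa [hm] at this
  have hc0 : ‖q.coeff 0‖ = A := by
    rw [hc 0 (Nat.zero_le m), Nat.sub_zero, ← hcard, esymm_card_eq_prod]
    rw [norm_mul, norm_mul, norm_pow, norm_neg, norm_one, one_pow, mul_one,
      multiset_prod_abs]
  have hesymm : ∀ k, 1 ≤ k → k ≤ m →
      ‖q.roots.esymm (m - k)‖ ≤ (m.choose k : ℝ) * P / R ^ k := by
    intro k hk1 hkm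
    unfold Multiset.esymm
    refine le_trans (abs_multiset_sum_le _) ?_
    rw [Multiset.map_map]
    have hbd : ∀ x ∈ Multiset.map (norm ∘ Multiset.prod)
        (q.roots.powersetCard (m - k)), x ≤ P / R ^ k := by
      intro x hx
      obtain ⟨t, ht, rfl⟩ := Multiset.mem_map.1 hx
      obtain ⟨hle, htcard⟩ := Multiset.mem_powersetCard.1 ht
      simp only [Function.comp_apply]
      rw [multiset_prod_abs]
      rw [le_div_iff₀ (pow_pos hRpos k)]
      have hsplit : t + (q.roots - t) = q.roots := add_tsub_cancel_of_le hle
      have hcards : Multiset.card (q.roots - t) = k := by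
        have := congrArg Multiset.card hsplit
        rw [Multiset.card_add] at this
        omega
      have hP : P = (t.map norm).prod * ((q.roots - t).map norm).prod := by
        rw [hPdef, ← hsplit, Multiset.map_add, Multiset.prod_add, hsplit]
      rw [hP]
      apply mul_le_mul_of_nonneg_left
      · have : R ^ Multiset.card ((q.roots - t).map norm) ≤
            ((q.roots - t).map norm).prod :=
          multiset_pow_card_le_prod _ R hRpos.le (by
            intro x hx
            obtain ⟨w, hw, rfl⟩ := Multiset.mem_map.1 hx
            exact (hroots w (Multiset.mem_of_le (Multiset.sub_le_self _ _) hw)).le)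
        rwa [Multiset.card_map, hcards] at this
      · exact multiset_prod_nonneg_real _ (by
          intro x hx
          obtain ⟨w, hw, rfl⟩ := Multiset.mem_map.1 hx
          exact (norm_nonneg w))
    refine le_trans (Multiset.sum_le_card_nsmul _ _ hbd) ?_
    rw [Multiset.card_map, Multiset.card_powersetCard, hcard, nsmul_eq_mul]
    rw [Nat.choose_symm hkm]
    rw [mul_div_assoc]
  have hterm : ∀ k, 1 ≤ k →
      ‖γ ^ k * ((k.factorial : ℂ)) * q.coeff k‖ ≤ (1/2 : ℝ) ^ k * A := by
    intro k hk1
    rw [norm_mul, norm_mul, norm_pow, Complex.norm_natCast]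
    by_cases hkm : k ≤ m
    · have hck : ‖q.coeff k‖ ≤ L * ((m.choose k : ℝ) * P / R ^ k) := by
        rw [hc k hkm, norm_mul, norm_mul, norm_pow, norm_neg, norm_one, one_pow, mul_one]
        exact mul_le_mul_of_nonneg_left (hesymm k hk1 hkm) (norm_nonneg _)
      calc ‖γ‖ ^ k * (k.factorial : ℝ) * ‖q.coeff k‖
          ≤ ‖γ‖ ^ k * (k.factorial : ℝ) * (L * ((m.choose k : ℝ) * P / R ^ k)) := by
            apply mul_le_mul_of_nonneg_left hck (by positivity)
        _ = ((k.factorial * m.choose k : ℕ) : ℝ) * (‖γ‖ ^ k / R ^ k) * A := by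
            push_cast; ring
        _ ≤ ((n ^ k : ℕ) : ℝ) * (‖γ‖ ^ k / R ^ k) * A := by
            apply mul_le_mul_of_nonneg_right
            apply mul_le_mul_of_nonneg_right
            · exact_mod_cast le_trans (le_of_eq (Nat.descFactorial_eq_factorial_mul_choose m k).symm)
                (le_trans (Nat.descFactorial_le_pow m k) (Nat.pow_le_pow_left hdeg k))
            · positivity
            · exact hApos.le
        _ = (1/2 : ℝ) ^ k * A := by
            congr 1
            have h : (n:ℝ) * ‖γ‖ / R = 1/2 := by
              rw [hRdef]; field_simp
            push_cast
            rw [← mul_div_assoc, ← mul_pow, ← div_pow, h]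
    · have : q.coeff k = 0 := coeff_eq_zero_of_natDegree_lt (by omega)
      rw [this, norm_zero, mul_zero]
      positivity
  have heval : ∀ k : ℕ, ((Polynomial.derivative)^[k] f).eval y = (k.factorial : ℂ) * q.coeff k := by
    intro k
    have h := Polynomial.factorial_smul_hasseDeriv (R := ℂ) (k := k)
    have h2 : (Polynomial.derivative)^[k] f = k.factorial • (Polynomial.hasseDeriv k f) := by
      rw [← h]; simp
    rw [h2, hqdef, taylor_coeff, nsmul_eq_mul, eval_mul, eval_natCast]
  intro hG
  have hfy : f.eval y = q.coeff 0 := by rw [hqdef, taylor_coeff_zero]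
  rw [Finset.range_eq_Ico, Finset.sum_eq_sum_Ico_succ_bot (Nat.succ_pos n)] at hG
  simp only [pow_zero, one_mul, Function.iterate_zero_apply] at hG
  have h1 : q.coeff 0 = -∑ k ∈ Finset.Ico 1 (n+1),
      γ ^ k * ((Polynomial.derivative)^[k] f).eval y := by
    rw [← hfy]; exact eq_neg_of_add_eq_zero_left hG
  have h2 : A ≤ (1 - (1/2:ℝ)^n) * A := by
    calc A = ‖q.coeff 0‖ := hc0.symm
      _ = ‖∑ k ∈ Finset.Ico 1 (n+1),
          γ ^ k * ((Polynomial.derivative)^[k] f).eval y‖ := by rw [h1, norm_neg]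
      _ ≤ ∑ k ∈ Finset.Ico 1 (n+1),
          ‖γ ^ k * ((Polynomial.derivative)^[k] f).eval y‖ :=
        norm_sum_le _ _
      _ ≤ ∑ k ∈ Finset.Ico 1 (n+1), (1/2:ℝ)^k * A := by
        apply Finset.sum_le_sum
        intro k hk
        rw [heval k, ← mul_assoc]
        exact hterm k (Finset.mem_Ico.1 hk).1
      _ = (1 - (1/2:ℝ)^n) * A := by rw [← Finset.sum_mul, sum_half_pow]
  have h3 : (0:ℝ) < (1/2:ℝ)^n := by positivity
  nlinarith

end Helpers

section OpLemmas

lemma Pn_natDegree_le {n : ℕ} (f : Pn n) : (f : Polynomial ℂ).natDegree ≤ n := by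
  have h := Polynomial.mem_degreeLT.1 f.2
  by_cases h0 : (f : Polynomial ℂ) = 0
  · rw [h0]; simp
  · have := (Polynomial.natDegree_lt_iff_degree_lt h0).2 (by exact_mod_cast h)
    omega

lemma Dop_coe {n : ℕ} (f : Pn n) :
    ((Dop n f : Pn n) : Polynomial ℂ) = Polynomial.derivative (f : Polynomial ℂ) := rfl

lemma Dop_pow_coe {n : ℕ} (k : ℕ) (f : Pn n) :
    (((Dop n ^ k) f : Pn n) : Polynomial ℂ) =
      (Polynomial.derivative)^[k] (f : Polynomial ℂ) := by
  induction k generalizing f with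
  | zero => simp
  | succ k ih =>
    rw [pow_succ, Module.End.mul_apply, ih (Dop n f), Dop_coe,
      ← Function.iterate_succ_apply]

lemma phiP_coe {n k : ℕ} (h : k ≤ n) :
    ((phiP n k h : Pn n) : Polynomial ℂ) = Polynomial.C (((k.factorial : ℂ))⁻¹) *
      Polynomial.X ^ k := rfl

lemma Dop_phiP {n k : ℕ} (h : k + 1 ≤ n) :
    Dop n (phiP n (k+1) h) = phiP n k (le_trans (Nat.le_succ k) h) := by
  apply Subtype.ext
  rw [Dop_coe, phiP_coe, phiP_coe]
  rw [Polynomial.derivative_C_mul, Polynomial.derivative_X_pow]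
  rw [Nat.add_sub_cancel]
  rw [← mul_assoc, ← Polynomial.C_mul]
  congr 2
  have h1 : ((k+1).factorial : ℂ) = (k+1) * k.factorial := by
    rw [Nat.factorial_succ]; push_cast; ring
  have h2 : (k.factorial : ℂ) ≠ 0 := Nat.cast_ne_zero.2 (Nat.factorial_ne_zero k)
  have h3 : ((k+1 : ℕ) : ℂ) ≠ 0 := Nat.cast_ne_zero.2 (Nat.succ_ne_zero k)
  have h4 : ((k:ℂ) + 1) ≠ 0 := by push_cast at h3; exact h3
  rw [h1, mul_inv]
  push_cast
  field_simp

lemma Dop_pow_zero (n : ℕ) : (Dop n) ^ (n + 1) = 0 := by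
  apply LinearMap.ext
  intro f
  apply Subtype.ext
  rw [Dop_pow_coe]
  have : (f : Polynomial ℂ).natDegree < n + 1 := Nat.lt_succ_of_le (Pn_natDegree_le f)
  simp [Polynomial.iterate_derivative_eq_zero this]

lemma Neumann (n : ℕ) (γ : ℂ) :
    (1 - γ • Dop n) * (∑ k ∈ Finset.range (n+1), (γ • Dop n)^k) = 1 := by
  have h := mul_geom_sum (γ • Dop n) (n+1)
  have h0 : (γ • Dop n)^(n+1) = 0 := by
    rw [_root_.smul_pow, Dop_pow_zero, smul_zero]
  rw [h0] at h
  rw [← neg_sub (γ • Dop n) 1, neg_mul, h]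
  simp

lemma Nact_eval {n : ℕ} (γ : ℂ) (f : Pn n) (y : ℂ) :
    ((((∑ k ∈ Finset.range (n+1), (γ • Dop n)^k) f : Pn n) : Polynomial ℂ)).eval y
      = ∑ k ∈ Finset.range (n+1),
          γ^k * ((Polynomial.derivative)^[k] (f : Polynomial ℂ)).eval y := by
  have h1 : ((∑ k ∈ Finset.range (n+1), (γ • Dop n)^k) f : Pn n)
      = ∑ k ∈ Finset.range (n+1), γ^k • ((Dop n ^ k) f) := by
    rw [LinearMap.sum_apply]
    refine Finset.sum_congr rfl fun k _ => ?_
    rw [_root_.smul_pow, LinearMap.smul_apply]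
  rw [h1, Submodule.coe_sum, Polynomial.eval_finset_sum]
  refine Finset.sum_congr rfl fun k _ => ?_
  rw [SetLike.val_smul, Polynomial.eval_smul, Dop_pow_coe, smul_eq_mul]

end OpLemmas


/-- For `γ ∈ ℂ`, the polynomial `g = γ^{n-1}φ_1 + γ^{n-2}φ_2 + ⋯ + γφ_{n-1} + φ_n`
satisfies `(I - γD)g = φ_n - γⁿ`, all roots of which have modulus `(n!)^{1/n}|γ|`;
consequently `K_h((I - γD)⁻¹) ≥ (n!)^{1/n}|γ|`. -/
theorem Kh_inverse_lower_bound (n : ℕ) (hn : 0 < n) (γ : ℂ)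
    (g : Pn n)
    (hg : g = ∑ j : Fin n, γ ^ (n - ((j : ℕ) + 1)) • phiP n ((j : ℕ) + 1)
      (Nat.succ_le_of_lt j.isLt)) :
    (1 - γ • Dop n) g = phiP n n le_rfl - γ ^ n • phiP n 0 (Nat.zero_le n) ∧
    (∀ z : ℂ, (((phiP n n le_rfl - γ ^ n • phiP n 0 (Nat.zero_le n) : Pn n)) :
        Polynomial ℂ).IsRoot z →
      ‖z‖ = ((Nat.factorial n : ℝ)) ^ (1 / (n : ℝ)) * ‖γ‖) ∧
    (∀ S : Module.End ℂ (Pn n), S * (1 - γ • Dop n) = 1 → (1 - γ • Dop n) * S = 1 →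
      ((Nat.factorial n : ℝ)) ^ (1 / (n : ℝ)) * ‖γ‖ ≤ Kh n S) := by
  classical
  have hfact : ((n.factorial : ℂ)) ≠ 0 := Nat.cast_ne_zero.2 (Nat.factorial_ne_zero n)
  -- Part 1
  set f₀ : Pn n := phiP n n le_rfl - γ ^ n • phiP n 0 (Nat.zero_le n) with hf₀def
  have h1 : (1 - γ • Dop n) g = f₀ := by
    set F : ℕ → Pn n := fun j => if h : j ≤ n then γ^(n-j) • phiP n j h else 0 with hF
    have hstep : ∀ j : Fin n,
        (γ ^ (n - ((j:ℕ)+1)) • phiP n ((j:ℕ)+1) (Nat.succ_le_of_lt j.isLt))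
          - γ • Dop n (γ ^ (n - ((j:ℕ)+1)) • phiP n ((j:ℕ)+1) (Nat.succ_le_of_lt j.isLt))
        = F ((j:ℕ)+1) - F (j:ℕ) := by
      intro j
      have hj1 : (j:ℕ)+1 ≤ n := Nat.succ_le_of_lt j.isLt
      have hjn : (j:ℕ) ≤ n := le_of_lt j.isLt
      rw [map_smul, Dop_phiP hj1]
      rw [hF]
      simp only [dif_pos hj1, dif_pos hjn]
      have he : n - ((j:ℕ)+1) + 1 = n - (j:ℕ) := by omega
      rw [smul_smul, ← pow_succ', he]
    calc (1 - γ • Dop n) g = g - γ • (Dop n g) := by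
          rw [LinearMap.sub_apply, Module.End.one_apply, LinearMap.smul_apply]
      _ = ∑ j : Fin n, ((γ ^ (n - ((j:ℕ)+1)) • phiP n ((j:ℕ)+1) (Nat.succ_le_of_lt j.isLt))
            - γ • Dop n (γ ^ (n - ((j:ℕ)+1)) • phiP n ((j:ℕ)+1) (Nat.succ_le_of_lt j.isLt))) := by
          rw [hg, map_sum, Finset.smul_sum, ← Finset.sum_sub_distrib]
      _ = ∑ j : Fin n, (F ((j:ℕ)+1) - F (j:ℕ)) := Finset.sum_congr rfl fun j _ => hstep j
      _ = ∑ j ∈ Finset.range n, (F (j+1) - F j) := Fin.sum_univ_eq_sum_range (fun j => F (j+1) - F j) n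
      _ = F n - F 0 := Finset.sum_range_sub F n
      _ = f₀ := by
          rw [hF, hf₀def]
          simp only [dif_pos le_rfl, dif_pos (Nat.zero_le n)]
          rw [Nat.sub_self, pow_zero, one_smul, Nat.sub_zero]
  -- polynomial form of f₀
  have hf0coe : ((f₀ : Pn n) : Polynomial ℂ)
      = Polynomial.C ((n.factorial : ℂ))⁻¹ * Polynomial.X ^ n - Polynomial.C (γ^n) := by
    rw [hf₀def, AddSubgroupClass.coe_sub, SetLike.val_smul, phiP_coe, phiP_coe]
    congr 1
    rw [Nat.factorial_zero, Nat.cast_one, inv_one, map_one, one_mul, pow_zero,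
      Polynomial.smul_eq_C_mul, mul_one]
  -- Part 2
  have h2 : ∀ z : ℂ, ((f₀ : Pn n) : Polynomial ℂ).IsRoot z →
      ‖z‖ = ((n.factorial : ℝ)) ^ (1 / (n : ℝ)) * ‖γ‖ := by
    intro z hz
    have hz' : ((n.factorial : ℂ))⁻¹ * z^n - γ^n = 0 := by
      have := hz
      rw [Polynomial.IsRoot, hf0coe] at this
      simpa using this
    have hzn : z^n = (n.factorial : ℂ) * γ^n := by
      field_simp at hz'
      linear_combination hz'
    have habs : ‖z‖ ^ n = (n.factorial : ℝ) * ‖γ‖ ^ n := by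
      have := congrArg norm hzn
      rwa [norm_pow, norm_mul, norm_pow, Complex.norm_natCast] at this
    have hn' : (n:ℝ) ≠ 0 := Nat.cast_ne_zero.2 hn.ne'
    have hbase : ‖z‖ = ((‖z‖ ^ n : ℝ)) ^ (1/(n:ℝ)) := by
      rw [← Real.rpow_natCast (‖z‖) n, ← Real.rpow_mul (norm_nonneg z),
        mul_one_div, div_self hn', Real.rpow_one]
    rw [hbase, habs, Real.mul_rpow (by positivity) (by positivity)]
    congr 1
    rw [← Real.rpow_natCast (‖γ‖) n, ← Real.rpow_mul (norm_nonneg γ),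
      mul_one_div, div_self hn', Real.rpow_one]
  refine ⟨h1, h2, ?_⟩
  -- Part 3
  intro S hS1 hS2
  by_cases hγ : γ = 0
  · subst hγ
    rw [norm_zero, mul_zero]
    apply Real.sSup_nonneg
    rintro d ⟨f, hf, rfl⟩
    apply Real.sSup_nonneg
    rintro x ⟨y, hy, rfl⟩
    exact Metric.infDist_nonneg
  · have hSN : S = ∑ k ∈ Finset.range (n+1), (γ • Dop n)^k := by
      have hN := Neumann n γ
      calc S = S * ((1 - γ • Dop n) * ∑ k ∈ Finset.range (n+1), (γ • Dop n)^k) := by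
            rw [hN, mul_one]
        _ = (S * (1 - γ • Dop n)) * ∑ k ∈ Finset.range (n+1), (γ • Dop n)^k := by
            rw [mul_assoc]
        _ = ∑ k ∈ Finset.range (n+1), (γ • Dop n)^k := by rw [hS1, one_mul]
    set B : ℝ := 2 * (n:ℝ) * ‖γ‖ with hB
    have hB0 : (0:ℝ) ≤ B := by positivity
    have hclose : ∀ (f : Pn n), 0 < (f : Polynomial ℂ).degree →
        ∀ y ∈ Zset ((S f : Pn n) : Polynomial ℂ),
          Metric.infDist y (Zset (f : Polynomial ℂ)) ≤ B := by
      intro f hf y hy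
      by_contra hcon
      push_neg at hcon
      have hf0 : (f : Polynomial ℂ) ≠ 0 := by
        intro h
        rw [h] at hf
        simp at hf
      have hfar : ∀ z : ℂ, (f : Polynomial ℂ).IsRoot z → B < ‖y - z‖ := by
        intro z hz
        have hle : Metric.infDist y (Zset (f : Polynomial ℂ)) ≤ dist y z :=
          Metric.infDist_le_dist_of_mem hz
        rw [Complex.dist_eq] at hle
        linarith
      have hne := key_far n hn γ hγ (f : Polynomial ℂ) hf0 (Pn_natDegree_le f) y hfar
      apply hne
      have heval0 : ((S f : Pn n) : Polynomial ℂ).eval y = 0 := hy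
      rw [hSN, Nact_eval] at heval0
      exact heval0
    have hKhBdd : ∀ d ∈ {d : ℝ | ∃ f : Pn n, 0 < (f : Polynomial ℂ).degree ∧
        d = dh (Zset (f : Polynomial ℂ)) (Zset ((S f : Pn n) : Polynomial ℂ))}, d ≤ B := by
      rintro d ⟨f, hf, rfl⟩
      apply Real.sSup_le _ hB0
      rintro x ⟨y, hy, rfl⟩
      exact hclose f hf y hy
    have hdeg₀ : 0 < ((f₀ : Pn n) : Polynomial ℂ).degree := by
      rw [hf0coe]
      have hC : ((n.factorial : ℂ))⁻¹ ≠ 0 := inv_ne_zero hfact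
      have hd1 : (Polynomial.C ((n.factorial:ℂ))⁻¹ * Polynomial.X^n).degree = (n : WithBot ℕ) :=
        Polynomial.degree_C_mul_X_pow n hC
      rw [Polynomial.degree_sub_eq_left_of_degree_lt (by
        rw [hd1]
        exact lt_of_le_of_lt Polynomial.degree_C_le (by exact_mod_cast hn)), hd1]
      exact_mod_cast hn
    have hSf₀ : S f₀ = g := by
      rw [← h1, ← Module.End.mul_apply, hS1, Module.End.one_apply]
    have h0g : (0:ℂ) ∈ Zset ((g : Pn n) : Polynomial ℂ) := by
      show ((g : Pn n) : Polynomial ℂ).IsRoot 0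
      rw [hg, Polynomial.IsRoot, Submodule.coe_sum, Polynomial.eval_finset_sum]
      apply Finset.sum_eq_zero
      intro j _
      rw [SetLike.val_smul, Polynomial.eval_smul, phiP_coe, Polynomial.eval_mul,
        Polynomial.eval_pow, Polynomial.eval_X, zero_pow (Nat.succ_ne_zero _), mul_zero,
        smul_zero]
    set r : ℝ := ((n.factorial : ℝ)) ^ (1 / (n : ℝ)) * ‖γ‖ with hr
    have hr0 : 0 ≤ r := by positivity
    have hZne : (Zset ((f₀ : Pn n) : Polynomial ℂ)).Nonempty := by
      obtain ⟨z, hz⟩ := Complex.exists_root hdeg₀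
      exact ⟨z, hz⟩
    have hrle : r ≤ Metric.infDist 0 (Zset ((f₀ : Pn n) : Polynomial ℂ)) := by
      have hforall : ∀ z ∈ Zset ((f₀ : Pn n) : Polynomial ℂ), r ≤ dist (0:ℂ) z := by
        intro z hz
        rw [dist_comm, dist_zero_right, h2 z hz]
      have htop : Metric.infEDist (0:ℂ) (Zset ((f₀ : Pn n) : Polynomial ℂ)) ≠ ⊤ :=
        Metric.infEdist_ne_top hZne
      have hle : ENNReal.ofReal r ≤ Metric.infEDist (0:ℂ)
          (Zset ((f₀ : Pn n) : Polynomial ℂ)) := by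
        rw [Metric.le_infEDist]
        intro z hz
        rw [edist_dist]
        exact ENNReal.ofReal_le_ofReal (hforall z hz)
      have hmono := ENNReal.toReal_mono htop hle
      rwa [ENNReal.toReal_ofReal hr0] at hmono
    have himgBdd : BddAbove ((fun y => Metric.infDist y (Zset ((f₀ : Pn n) : Polynomial ℂ)))
        '' (Zset ((g : Pn n) : Polynomial ℂ))) := by
      refine ⟨B, ?_⟩
      rintro x ⟨y, hy, rfl⟩
      exact hclose f₀ hdeg₀ y (by rw [hSf₀]; exact hy)
    have hr_d₀ : r ≤ dh (Zset ((f₀ : Pn n) : Polynomial ℂ))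
        (Zset ((g : Pn n) : Polynomial ℂ)) :=
      le_trans hrle (le_csSup himgBdd ⟨0, h0g, rfl⟩)
    have hd₀mem : dh (Zset ((f₀ : Pn n) : Polynomial ℂ)) (Zset ((g : Pn n) : Polynomial ℂ))
        ∈ {d : ℝ | ∃ f : Pn n, 0 < (f : Polynomial ℂ).degree ∧
          d = dh (Zset (f : Polynomial ℂ)) (Zset ((S f : Pn n) : Polynomial ℂ))} :=
      ⟨f₀, hdeg₀, by rw [hSf₀]⟩
    exact le_trans hr_d₀ (le_csSup ⟨B, hKhBdd⟩ hd₀mem)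
end
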